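/- arXiv:1908.03788 — 2 statements merged into one kernel-verified Lean document; each statement's English description precedes it below -/
import Mathlib

section
/- Every chordal graph on at least one vertex has a simplicial vertex. -/
variable {V : Type*}

/-- `p` is an induced path on `k` vertices in `G`: injective, and adjacency holds
exactly between consecutive vertices. -/
def IsInducedPathOn (G : SimpleGraph V) (k : ℕ) (p : Fin k → V) : Prop :=
  Function.Injective p ∧
    ∀ i j : Fin k, G.Adj (p i) (p j) ↔ (i.val + 1 = j.val ∨ j.val + 1 = i.val)

/-- `c` is an induced cycle on `n ≥ 3` vertices in `G`: injective, and adjacency holds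
exactly between cyclically consecutive vertices. -/
def IsInducedCycleOn (G : SimpleGraph V) (n : ℕ) (c : Fin n → V) : Prop :=
  3 ≤ n ∧ Function.Injective c ∧
    ∀ i j : Fin n, G.Adj (c i) (c j) ↔ ((i.val + 1) % n = j.val ∨ (j.val + 1) % n = i.val)

/-- The vertices of `q` all lie on some induced cycle of `G`. -/
def InInducedCycle (G : SimpleGraph V) {m : ℕ} (q : Fin m → V) : Prop :=
  ∃ (n : ℕ) (c : Fin n → V), IsInducedCycleOn G n c ∧ Set.range q ⊆ Set.range c

/-- `q` is an extension of the induced path `p`: an induced path on `k+2` vertices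
whose middle `k` vertices are `p` (one new vertex at each end). -/
def IsExtension (G : SimpleGraph V) {k : ℕ} (p : Fin k → V) (q : Fin (k + 2) → V) : Prop :=
  IsInducedPathOn G (k + 2) q ∧ ∀ i : Fin k, q i.succ.castSucc = p i

/-- `p` is an avoidable path in `G`: an induced path each of whose extensions lies on an
induced cycle of `G`. -/
def IsAvoidable (G : SimpleGraph V) {k : ℕ} (p : Fin k → V) : Prop :=
  IsInducedPathOn G k p ∧
    ∀ q : Fin (k + 2) → V, IsExtension G p q → InInducedCycle G q

/-- `v` is an avoidable vertex: every induced path `x–v–y` lies on an induced cycle. -/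
def AvoidableVertex (G : SimpleGraph V) (v : V) : Prop :=
  ∀ x y : V, G.Adj x v → G.Adj v y → x ≠ y → ¬ G.Adj x y → InInducedCycle G ![x, v, y]

/-- `v` lies outside the closed neighbourhood of `w`. -/
def OutsideClosedNbhd (G : SimpleGraph V) (w v : V) : Prop :=
  v ≠ w ∧ ¬ G.Adj w v

/-- Property `H_R(G,k,w)`: either `G − N[w]` has no induced path on `k` vertices,
or there is an induced path on `k` vertices inside `G − N[w]` avoidable in `G`. -/
def HR (G : SimpleGraph V) (k : ℕ) (w : V) : Prop :=
  (¬ ∃ p : Fin k → V, IsInducedPathOn G k p ∧ ∀ i, OutsideClosedNbhd G w (p i)) ∨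
  (∃ p : Fin k → V, IsInducedPathOn G k p ∧ (∀ i, OutsideClosedNbhd G w (p i)) ∧
    ∀ q : Fin (k + 2) → V, IsExtension G p q → InInducedCycle G q)

/-- The graph obtained from `G` by merging adjacent vertices `u₁, u₂` into one vertex
(represented by `u₁`, with `u₂` becoming an isolated stray vertex). -/
def mergeGraph (G : SimpleGraph V) (u₁ u₂ : V) : SimpleGraph V where
  Adj a b := a ≠ b ∧ a ≠ u₂ ∧ b ≠ u₂ ∧
    (G.Adj a b ∨ (a = u₁ ∧ G.Adj u₂ b) ∨ (b = u₁ ∧ G.Adj a u₂))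
  symm := ⟨by
    rintro a b ⟨h1, h2, h3, h4⟩
    refine ⟨h1.symm, h3, h2, ?_⟩
    rcases h4 with h | ⟨ha, h⟩ | ⟨hb, h⟩
    · exact Or.inl h.symm
    · exact Or.inr (Or.inr ⟨ha, h.symm⟩)
    · exact Or.inr (Or.inl ⟨hb, h.symm⟩)⟩
  loopless := ⟨fun a h => h.1 rfl⟩

/-- `G` is chordal: every induced cycle has exactly three vertices. -/
def Chordal (G : SimpleGraph V) : Prop :=
  ∀ (n : ℕ) (c : Fin n → V), IsInducedCycleOn G n c → n = 3

/-- `v` is a simplicial vertex: its neighbourhood is a clique. -/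
def SimplicialVertex (G : SimpleGraph V) (v : V) : Prop :=
  ∀ x y : V, G.Adj v x → G.Adj v y → x ≠ y → G.Adj x y



/-- A walk of length `m` from `x` to `y` inside the set `T`. -/
def GWalk (G : SimpleGraph V) (T : Set V) (f : ℕ → V) (m : ℕ) (x y : V) : Prop :=
  f 0 = x ∧ f m = y ∧ (∀ i, i < m → G.Adj (f i) (f (i + 1))) ∧ (∀ i, i ≤ m → f i ∈ T)

/-- `y` is reachable from `x` by a walk inside `T`. -/
def Reach (G : SimpleGraph V) (T : Set V) (x y : V) : Prop :=
  ∃ m f, GWalk G T f m x y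

lemma reach_refl {G : SimpleGraph V} {T : Set V} {x : V} (hx : x ∈ T) : Reach G T x x :=
  ⟨0, fun _ => x, rfl, rfl, fun i hi => absurd hi (Nat.not_lt_zero i), fun _ _ => hx⟩

lemma reach_single {G : SimpleGraph V} {T : Set V} {x y : V} (h : G.Adj x y)
    (hx : x ∈ T) (hy : y ∈ T) : Reach G T x y := by
  refine ⟨1, fun i => if i = 0 then x else y, by simp, by simp, ?_, ?_⟩
  · intro i hi
    interval_cases i
    simpa using h
  · intro i hi
    interval_cases i <;> simp [hx, hy]

lemma reach_symm {G : SimpleGraph V} {T : Set V} {x y : V} (h : Reach G T x y) :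
    Reach G T y x := by
  obtain ⟨m, f, h0, hm, hadj, hmem⟩ := h
  refine ⟨m, fun i => f (m - i), by simpa, by simpa, ?_, ?_⟩
  · intro i hi
    have h1 : m - (i + 1) + 1 = m - i := by omega
    have := (hadj (m - (i + 1)) (by omega)).symm
    rwa [h1] at this
  · intro i hi
    exact hmem _ (by omega)

lemma reach_trans {G : SimpleGraph V} {T : Set V} {x y z : V}
    (h1 : Reach G T x y) (h2 : Reach G T y z) : Reach G T x z := by
  obtain ⟨m1, f1, g0, gm, gadj, gmem⟩ := h1
  obtain ⟨m2, f2, k0, km, kadj, kmem⟩ := h2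
  refine ⟨m1 + m2, fun i => if i ≤ m1 then f1 i else f2 (i - m1), by simp [g0], ?_, ?_, ?_⟩
  · by_cases hm2 : m2 = 0
    · simp [hm2, gm, ← k0, ← km, hm2]
    · have : ¬ (m1 + m2 ≤ m1) := by omega
      simp only [this, if_false]
      simpa using km
  · intro i hi
    rcases lt_trichotomy i m1 with h | h | h
    · simp only [if_pos (le_of_lt h), if_pos (Nat.succ_le_of_lt h)]
      exact gadj i h
    · subst h
      have : ¬ (i + 1 ≤ i) := by omega
      simp only [le_refl, if_pos, this, if_false]
      have h' : i + 1 - i = 1 := by omega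
      rw [h', gm, ← k0]
      exact kadj 0 (by omega)
    · have h1 : ¬ (i ≤ m1) := by omega
      have h2' : ¬ (i + 1 ≤ m1) := by omega
      simp only [h1, h2', if_false]
      have : i + 1 - m1 = (i - m1) + 1 := by omega
      rw [this]
      exact kadj (i - m1) (by omega)
  · intro i hi
    by_cases h : i ≤ m1
    · simp only [h, if_pos]
      exact gmem i h
    · simp only [h, if_false]
      exact kmem (i - m1) (by omega)

lemma reach_prefix {G : SimpleGraph V} {T : Set V} {f : ℕ → V} {m : ℕ} {x y : V}
    (h : GWalk G T f m x y) {i : ℕ} (hi : i ≤ m) : Reach G T x (f i) :=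
  ⟨i, f, h.1, rfl, fun j hj => h.2.2.1 j (by omega), fun j hj => h.2.2.2 j (by omega)⟩

lemma gwalk_mem_left {G : SimpleGraph V} {T : Set V} {f : ℕ → V} {m : ℕ} {x y : V}
    (h : GWalk G T f m x y) : x ∈ T := h.1 ▸ h.2.2.2 0 (Nat.zero_le m)

lemma gwalk_mem_right {G : SimpleGraph V} {T : Set V} {f : ℕ → V} {m : ℕ} {x y : V}
    (h : GWalk G T f m x y) : y ∈ T := h.2.1 ▸ h.2.2.2 m le_rfl
lemma shortcut_eq {G : SimpleGraph V} {T : Set V} {f : ℕ → V} {m : ℕ} {x y : V}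
    (h : GWalk G T f m x y) {i j : ℕ} (hij : i < j) (hj : j ≤ m) (heq : f i = f j) :
    ∃ m' f', m' < m ∧ GWalk G T f' m' x y := by
  obtain ⟨h0, hm, hadj, hmem⟩ := h
  refine ⟨m - (j - i), fun k => if k ≤ i then f k else f (k + (j - i)), by omega, ?_, ?_, ?_, ?_⟩
  · simp [h0]
  · by_cases hc : m - (j - i) ≤ i
    · have hji : j = m := by omega
      have hii : m - (j - i) = i := by omega
      simp only [hii, le_refl, if_pos]
      rw [heq, hji, hm]
    · simp only [hc, if_false]
      have : m - (j - i) + (j - i) = m := by omega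
      rw [this, hm]
  · intro k hk
    rcases lt_trichotomy k i with h | h | h
    · simp only [if_pos (le_of_lt h), if_pos (Nat.succ_le_of_lt h)]
      exact hadj k (by omega)
    · subst h
      have h2 : ¬ (k + 1 ≤ k) := by omega
      simp only [le_refl, if_pos, h2, if_false]
      have : k + 1 + (j - k) = j + 1 := by omega
      rw [this, heq]
      exact hadj j (by omega)
    · have h1 : ¬ (k ≤ i) := by omega
      have h2 : ¬ (k + 1 ≤ i) := by omega
      simp only [h1, h2, if_false]
      have : k + 1 + (j - i) = k + (j - i) + 1 := by omega
      rw [this]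
      exact hadj (k + (j - i)) (by omega)
  · intro k hk
    by_cases h : k ≤ i
    · simp only [h, if_pos]
      exact hmem k (by omega)
    · simp only [h, if_false]
      exact hmem _ (by omega)

lemma shortcut_adj {G : SimpleGraph V} {T : Set V} {f : ℕ → V} {m : ℕ} {x y : V}
    (h : GWalk G T f m x y) {i j : ℕ} (hij : i + 1 < j) (hj : j ≤ m)
    (hadj' : G.Adj (f i) (f j)) :
    ∃ m' f', m' < m ∧ GWalk G T f' m' x y := by
  obtain ⟨h0, hm, hadj, hmem⟩ := h
  have hd : 1 ≤ j - i - 1 := by omega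
  refine ⟨m - (j - i - 1), fun k => if k ≤ i then f k else f (k + (j - i - 1)), by omega,
    ?_, ?_, ?_, ?_⟩
  · simp [h0]
  · have hc : ¬ (m - (j - i - 1) ≤ i) := by omega
    simp only [hc, if_false]
    have : m - (j - i - 1) + (j - i - 1) = m := by omega
    rw [this, hm]
  · intro k hk
    rcases lt_trichotomy k i with h | h | h
    · simp only [if_pos (le_of_lt h), if_pos (Nat.succ_le_of_lt h)]
      exact hadj k (by omega)
    · subst h
      have h2 : ¬ (k + 1 ≤ k) := by omega
      simp only [le_refl, if_pos, h2, if_false]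
      have : k + 1 + (j - k - 1) = j := by omega
      rw [this]
      exact hadj'
    · have h1 : ¬ (k ≤ i) := by omega
      have h2 : ¬ (k + 1 ≤ i) := by omega
      simp only [h1, h2, if_false]
      have : k + 1 + (j - i - 1) = k + (j - i - 1) + 1 := by omega
      rw [this]
      exact hadj (k + (j - i - 1)) (by omega)
  · intro k hk
    by_cases h : k ≤ i
    · simp only [h, if_pos]
      exact hmem k (by omega)
    · simp only [h, if_false]
      exact hmem _ (by omega)

/-- A minimal-length walk exists, and it is an induced path. -/
lemma exists_induced_walk {G : SimpleGraph V} {T : Set V} {x y : V} (h : Reach G T x y) :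
    ∃ m f, GWalk G T f m x y ∧
      (∀ i j, i ≤ m → j ≤ m → f i = f j → i = j) ∧
      (∀ i j, i ≤ m → j ≤ m → (G.Adj (f i) (f j) ↔ (i + 1 = j ∨ j + 1 = i))) := by
  have hP : ∃ m, ∃ f, GWalk G T f m x y := h
  classical
  set m := Nat.find hP with hmdef
  obtain ⟨f, hf⟩ := Nat.find_spec hP
  have hmin : ∀ m' < m, ∀ f', ¬ GWalk G T f' m' x y := by
    intro m' hm' f' hc
    exact Nat.find_min hP hm' ⟨f', hc⟩
  refine ⟨m, f, hf, ?_, ?_⟩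
  · intro i j hi hj heq
    by_contra hne
    rcases lt_or_gt_of_ne hne with h | h
    · obtain ⟨m', f', hlt, hw⟩ := shortcut_eq hf h hj heq
      exact hmin m' hlt f' hw
    · obtain ⟨m', f', hlt, hw⟩ := shortcut_eq hf h hi heq.symm
      exact hmin m' hlt f' hw
  · intro i j hi hj
    constructor
    · intro hadj
      by_contra hcon
      push_neg at hcon
      rcases lt_trichotomy i j with h | h | h
      · have : i + 1 < j := by omega
        obtain ⟨m', f', hlt, hw⟩ := shortcut_adj hf this hj hadj
        exact hmin m' hlt f' hw
      · exact G.loopless.irrefl _ (h ▸ hadj)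
      · have : j + 1 < i := by omega
        obtain ⟨m', f', hlt, hw⟩ := shortcut_adj hf this hi hadj.symm
        exact hmin m' hlt f' hw
    · rintro (h | h)
      · exact h ▸ hf.2.2.1 i (by omega)
      · exact (h ▸ hf.2.2.1 j (by omega)).symm

/-- `S` separates `a` from `b`. -/
def GSep (G : SimpleGraph V) (a b : V) (S : Set V) : Prop :=
  a ∉ S ∧ b ∉ S ∧ ¬ Reach G Sᶜ a b

/-- The connected component of `a` in `G - S`. -/
def Comp (G : SimpleGraph V) (S : Set V) (a : V) : Set V := {v | Reach G Sᶜ a v}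

lemma comp_subset {G : SimpleGraph V} {S : Set V} {a : V} : Comp G S a ⊆ Sᶜ := by
  rintro v ⟨m, f, hf⟩
  exact gwalk_mem_right hf

lemma mem_comp_self {G : SimpleGraph V} {S : Set V} {a : V} (ha : a ∉ S) : a ∈ Comp G S a :=
  reach_refl ha

lemma comp_adj_closed {G : SimpleGraph V} {S : Set V} {a v w : V} (hv : v ∈ Comp G S a)
    (hadj : G.Adj v w) (hw : w ∉ S) : w ∈ Comp G S a :=
  reach_trans hv (reach_single hadj (comp_subset hv) hw)

lemma sep_symm {G : SimpleGraph V} {a b : V} {S : Set V} (h : GSep G a b S) : GSep G b a S :=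
  ⟨h.2.1, h.1, fun hr => h.2.2 (reach_symm hr)⟩

lemma comp_disjoint {G : SimpleGraph V} {a b : V} {S : Set V} (h : GSep G a b S) {v : V}
    (hva : v ∈ Comp G S a) (hvb : v ∈ Comp G S b) : False :=
  h.2.2 (reach_trans hva (reach_symm hvb))

lemma cross_nonadj {G : SimpleGraph V} {a b : V} {S : Set V} (h : GSep G a b S) {u v : V}
    (hu : u ∈ Comp G S a) (hv : v ∈ Comp G S b) : ¬ G.Adj u v := fun hadj =>
  comp_disjoint h (comp_adj_closed hu hadj (comp_subset hv)) hv

lemma reach_in_comp {G : SimpleGraph V} {S : Set V} {a u v : V} (hu : u ∈ Comp G S a)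
    (h : Reach G Sᶜ u v) : Reach G (Comp G S a) u v := by
  obtain ⟨m, f, hf⟩ := h
  refine ⟨m, f, hf.1, hf.2.1, hf.2.2.1, fun i hi => ?_⟩
  have : Reach G Sᶜ u (f i) := reach_prefix hf hi
  exact reach_trans hu this

/-- There is a minimal separator between nonadjacent distinct vertices; each of its
vertices has a neighbour in both components. -/
lemma exists_min_sep [Fintype V] [DecidableEq V] {G : SimpleGraph V} {a b : V}
    (hab : a ≠ b) (hnadj : ¬ G.Adj a b) :
    ∃ S : Finset V, GSep G a b ↑S ∧
      (∀ x ∈ S, ∃ u ∈ Comp G ↑S a, G.Adj x u) ∧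
      (∀ x ∈ S, ∃ u ∈ Comp G ↑S b, G.Adj x u) := by
  classical
  have hP : ∃ n, ∃ S : Finset V, S.card = n ∧ GSep G a b ↑S := by
    refine ⟨(Finset.univ \ {a, b}).card, Finset.univ \ {a, b}, rfl, by simp [hab], by simp, ?_⟩
    rintro ⟨m, f, h0, hm, hadj, hmem⟩
    have hmemab : ∀ i, i ≤ m → f i = a ∨ f i = b := by
      intro i hi
      have := hmem i hi
      simp only [Finset.coe_sdiff, Finset.coe_univ, Set.mem_compl_iff, Set.mem_diff] at this
      by_cases ha : f i = a
      · exact Or.inl ha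
      · right
        by_contra hb
        exact this ⟨trivial, by simp [ha, hb]⟩
    have hm1 : 1 ≤ m := by
      rcases Nat.eq_zero_or_pos m with h | h
      · subst h
        exact absurd (h0.symm.trans hm) hab
      · omega
    have h1 := hadj 0 (by omega)
    rw [h0] at h1
    rcases hmemab 1 (by omega) with h | h
    · rw [h] at h1; exact G.loopless.irrefl a h1
    · rw [h] at h1; exact hnadj h1
  obtain ⟨S, hScard, hSep⟩ := Nat.find_spec hP
  have hmin : ∀ S' : Finset V, GSep G a b ↑S' → S.card ≤ S'.card := by
    intro S' hS'
    by_contra hc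
    have hlt : S'.card < Nat.find hP := by omega
    exact Nat.find_min hP hlt ⟨S', rfl, hS'⟩
  have key : ∀ (c d : V), GSep G c d ↑S → (∀ S' : Finset V, GSep G c d ↑S' → S.card ≤ S'.card) →
      ∀ x ∈ S, ∃ u ∈ Comp G ↑S c, G.Adj x u := by
    intro c d hSep hmin x hx
    by_contra hno
    push_neg at hno
    have hsepe : GSep G c d ↑(S.erase x) := by
      refine ⟨fun h => hSep.1 (by simpa using (Finset.mem_erase.mp h).2),
        fun h => hSep.2.1 (by simpa using (Finset.mem_erase.mp h).2), ?_⟩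
      rintro ⟨m, f, h0, hm, hadj, hmem⟩
      have hall : ∀ i, i ≤ m → f i ∈ Comp G ↑S c := by
        intro i
        induction i with
        | zero => intro _; rw [h0]; exact mem_comp_self hSep.1
        | succ i ih =>
          intro hi
          have hfi := ih (by omega)
          have hadji := hadj i (by omega)
          by_cases hfS : f (i + 1) ∈ (↑S : Set V)
          · have : f (i+1) ∈ (↑(S.erase x) : Set V)ᶜ := hmem (i+1) hi
            have hfx : f (i + 1) = x := by
              simp only [Finset.coe_erase, Set.mem_compl_iff, Set.mem_diff] at this
              by_contra hne
              exact this ⟨hfS, by simpa using hne⟩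
            exact absurd (hadji.symm) (by rw [hfx]; exact fun h => hno (f i) hfi h)
          · exact comp_adj_closed hfi hadji hfS
      have : d ∈ Comp G ↑S c := hm ▸ hall m le_rfl
      exact hSep.2.2 this
    have := hmin (S.erase x) hsepe
    have : (S.erase x).card < S.card := Finset.card_erase_lt_of_mem hx
    omega
  refine ⟨S, hSep, key a b hSep hmin, key b a (sep_symm hSep) ?_⟩
  intro S' hS'
  exact hmin S' (sep_symm hS')

lemma cyc_iff {i j n : ℕ} (hi : i < n) (hj : j < n) :
    ((i + 1) % n = j ∨ (j + 1) % n = i) ↔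
      ((i + 1 = j ∨ j + 1 = i) ∨ (i + 1 = n ∧ j = 0) ∨ (j + 1 = n ∧ i = 0)) := by
  rcases Nat.lt_or_ge (i + 1) n with h1 | h1 <;> rcases Nat.lt_or_ge (j + 1) n with h2 | h2
  · rw [Nat.mod_eq_of_lt h1, Nat.mod_eq_of_lt h2]; omega
  · have : j + 1 = n := by omega
    rw [Nat.mod_eq_of_lt h1, this, Nat.mod_self]; omega
  · have : i + 1 = n := by omega
    rw [Nat.mod_eq_of_lt h2, this, Nat.mod_self]; omega
  · have e1 : i + 1 = n := by omega
    have e2 : j + 1 = n := by omega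
    rw [e1, e2, Nat.mod_self]; omega

/-- In a chordal graph, a minimal separator (each of whose vertices sees both components)
is a clique. -/
lemma sep_clique {G : SimpleGraph V} (hG : Chordal G) {a b : V} {S : Set V}
    (hSep : GSep G a b S)
    (hNA : ∀ x ∈ S, ∃ u ∈ Comp G S a, G.Adj x u)
    (hNB : ∀ x ∈ S, ∃ u ∈ Comp G S b, G.Adj x u)
    {x y : V} (hx : x ∈ S) (hy : y ∈ S) (hxy : x ≠ y) : G.Adj x y := by
  by_contra hnadj
  set A := Comp G S a with hA
  set B := Comp G S b with hB
  -- an induced path from x to y with interior in A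
  have hreach : ∀ (C : Set V), (∀ z ∈ S, ∃ u ∈ C, G.Adj z u) → (∀ c, c ∈ C → Reach G Sᶜ c c) →
      (∀ u v, u ∈ C → v ∈ C → Reach G C u v) → Reach G (C ∪ {x, y}) x y := by
    intro C hN _ htrans
    obtain ⟨u, hu, hxu⟩ := hN x hx
    obtain ⟨v, hv, hyv⟩ := hN y hy
    have h1 : Reach G (C ∪ {x, y}) x u :=
      reach_single hxu (by simp) (Or.inl hu)
    have h2 : Reach G (C ∪ {x, y}) u v := by
      obtain ⟨m, f, hf⟩ := htrans u v hu hv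
      exact ⟨m, f, hf.1, hf.2.1, hf.2.2.1, fun i hi => Or.inl (hf.2.2.2 i hi)⟩
    have h3 : Reach G (C ∪ {x, y}) v y :=
      reach_single hyv.symm (Or.inl hv) (by simp)
    exact reach_trans (reach_trans h1 h2) h3
  have compReach : ∀ (c : V), ∀ u v, u ∈ Comp G S c → v ∈ Comp G S c →
      Reach G (Comp G S c) u v := by
    intro c u v hu hv
    exact reach_in_comp hu (reach_trans (reach_symm hu) hv)
  obtain ⟨s, f, hf, finj, fadj⟩ := exists_induced_walk
    (hreach A (hNA) (fun c hc => reach_refl (comp_subset hc)) (compReach a))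
  obtain ⟨t, g, hg, ginj, gadj⟩ := exists_induced_walk
    (hreach B (hNB) (fun c hc => reach_refl (comp_subset hc)) (compReach b))
  have hf0 : f 0 = x := hf.1
  have hfs : f s = y := hf.2.1
  have hg0 : g 0 = x := hg.1
  have hgt : g t = y := hg.2.1
  have hxA : x ∉ A := fun h => comp_subset h hx
  have hyA : y ∉ A := fun h => comp_subset h hy
  have hxB : x ∉ B := fun h => comp_subset h hx
  have hyB : y ∉ B := fun h => comp_subset h hy
  have hs2 : 2 ≤ s := by
    rcases Nat.lt_or_ge s 2 with h | h
    · interval_cases s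
      · exact absurd (hf0.symm.trans hfs) hxy
      · exact absurd (hf0 ▸ hfs ▸ hf.2.2.1 0 (by omega)) hnadj
    · exact h
  have ht2 : 2 ≤ t := by
    rcases Nat.lt_or_ge t 2 with h | h
    · interval_cases t
      · exact absurd (hg0.symm.trans hgt) hxy
      · exact absurd (hg0 ▸ hgt ▸ hg.2.2.1 0 (by omega)) hnadj
    · exact h
  have fint : ∀ i, 0 < i → i < s → f i ∈ A := by
    intro i h0 hs
    rcases hf.2.2.2 i (by omega) with h | h
    · exact h
    · rcases h with h | h
      · exact absurd (finj i 0 (by omega) (by omega) (h.trans hf0.symm)) (by omega)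
      · exact absurd (finj i s (by omega) (by omega) (h.trans hfs.symm)) (by omega)
  have gint : ∀ i, 0 < i → i < t → g i ∈ B := by
    intro i h0 hs
    rcases hg.2.2.2 i (by omega) with h | h
    · exact h
    · rcases h with h | h
      · exact absurd (ginj i 0 (by omega) (by omega) (h.trans hg0.symm)) (by omega)
      · exact absurd (ginj i t (by omega) (by omega) (h.trans hgt.symm)) (by omega)
  set n := s + t with hn
  have hn4 : 4 ≤ n := by omega
  set c' : ℕ → V := fun i => if i ≤ s then f i else g (n - i) with hc'
  -- the key adjacency characterisation
  have haux : ∀ i j : ℕ, i ≤ j → j < n →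
      (G.Adj (c' i) (c' j) ↔ ((i + 1) % n = j ∨ (j + 1) % n = i)) := by
    intro i j hij hjn
    rw [cyc_iff (by omega) hjn]
    by_cases hjs : j ≤ s
    · have e1 : c' i = f i := if_pos (by omega)
      have e2 : c' j = f j := if_pos hjs
      rw [e1, e2, fadj i j (by omega) hjs]
      omega
    · have e2 : c' j = g (n - j) := if_neg hjs
      by_cases his : i ≤ s
      · rcases Nat.eq_zero_or_pos i with hi0 | hi0
        · have e1 : c' i = g 0 := by
            subst hi0
            show (if 0 ≤ s then f 0 else g (n - 0)) = g 0
            rw [if_pos (Nat.zero_le s), hf0, hg0]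
          rw [e1, e2, gadj 0 (n - j) (by omega) (by omega)]
          omega
        · rcases Nat.eq_or_lt_of_le his with hiseq | hilt
          · have e1 : c' i = g t := by
              show (if i ≤ s then f i else g (n - i)) = g t
              rw [if_pos his, hiseq, hfs, hgt]
            rw [e1, e2, gadj t (n - j) le_rfl (by omega)]
            omega
          · have e1 : c' i = f i := if_pos his
            have hfiA : f i ∈ A := fint i hi0 hilt
            have hgjB : g (n - j) ∈ B := gint (n - j) (by omega) (by omega)
            have hnadj2 : ¬ G.Adj (c' i) (c' j) := by
              rw [e1, e2]
              exact cross_nonadj hSep hfiA hgjB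
            exact iff_of_false hnadj2 (by omega)
      · have e1 : c' i = g (n - i) := if_neg his
        rw [e1, e2, gadj (n - i) (n - j) (by omega) (by omega)]
        omega
  have hccycle : IsInducedCycleOn G n (fun i : Fin n => c' i.val) := by
    refine ⟨by omega, ?_, ?_⟩
    · intro i j heq
      simp only at heq
      apply Fin.ext
      by_cases his : i.val ≤ s <;> by_cases hjs : j.val ≤ s
      · rw [hc'] at heq
        simp only [if_pos his, if_pos hjs] at heq
        exact finj _ _ his hjs heq
      · exfalso
        rw [hc'] at heq
        simp only [if_pos his, if_neg hjs] at heq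
        have hgB : g (n - j.val) ∈ B := gint _ (by omega) (by have := j.isLt; omega)
        rcases Nat.eq_zero_or_pos i.val with h0 | h0
        · rw [h0, hf0] at heq; exact hxB (heq ▸ hgB)
        · rcases Nat.eq_or_lt_of_le his with he | hl
          · rw [he, hfs] at heq; exact hyB (heq ▸ hgB)
          · exact comp_disjoint hSep (fint _ h0 hl) (heq ▸ hgB)
      · exfalso
        rw [hc'] at heq
        simp only [if_neg his, if_pos hjs] at heq
        have hgB : g (n - i.val) ∈ B := gint _ (by omega) (by have := i.isLt; omega)
        rcases Nat.eq_zero_or_pos j.val with h0 | h0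
        · rw [h0, hf0] at heq; exact hxB (heq ▸ hgB)
        · rcases Nat.eq_or_lt_of_le hjs with he | hl
          · rw [he, hfs] at heq; exact hyB (heq ▸ hgB)
          · exact comp_disjoint hSep (fint _ h0 hl) (heq.symm ▸ hgB)
      · rw [hc'] at heq
        simp only [if_neg his, if_neg hjs] at heq
        have := ginj _ _ (show n - i.val ≤ t by omega) (show n - j.val ≤ t by omega) heq
        have hi := i.isLt
        have hj := j.isLt
        omega
    · intro i j
      rcases Nat.le_total i.val j.val with h | h
      · exact haux i.val j.val h j.isLt
      · rw [G.adj_comm, or_comm]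
        exact haux j.val i.val h i.isLt
  have := hG n _ hccycle
  omega

lemma chordal_induce {G : SimpleGraph V} (hG : Chordal G) (s : Set V) :
    Chordal (G.induce s) := by
  intro n c hc
  refine hG n (fun i => (c i : V)) ⟨hc.1, ?_, ?_⟩
  · exact Subtype.val_injective.comp hc.2.1
  · intro i j
    rw [← hc.2.2 i j]
    rfl

lemma simplicial_of_induce {G : SimpleGraph V} {s : Set V} {v : V} (hv : v ∈ s)
    (hclosed : ∀ w, G.Adj v w → w ∈ s)
    (hsimp : SimplicialVertex (G.induce s) ⟨v, hv⟩) : SimplicialVertex G v := by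
  intro p q hp hq hpq
  have hps := hclosed p hp
  have hqs := hclosed q hq
  exact hsimp ⟨p, hps⟩ ⟨q, hqs⟩ hp hq (fun h => hpq (congrArg Subtype.val h))

theorem key : ∀ (n : ℕ) (W : Type u_1) [Fintype W] (G : SimpleGraph W), Fintype.card W ≤ n →
    Chordal G → ∀ a b : W, a ≠ b → ¬ G.Adj a b →
    ∃ u v : W, u ≠ v ∧ ¬ G.Adj u v ∧ SimplicialVertex G u ∧ SimplicialVertex G v := by
  intro n
  induction n with
  | zero =>
    intro W _ G hcard _ a b _ _
    have : 0 < Fintype.card W := Fintype.card_pos_iff.mpr ⟨a⟩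
    omega
  | succ n ih =>
    intro W _ G hcard hG a b hab hnadj
    classical
    obtain ⟨S, hSep, hNA, hNB⟩ := exists_min_sep hab hnadj
    have hclique : ∀ x ∈ (↑S : Set W), ∀ y ∈ (↑S : Set W), x ≠ y → G.Adj x y :=
      fun x hx y hy hxy => sep_clique hG hSep hNA hNB hx hy hxy
    have side : ∀ (c d : W), GSep G c d ↑S →
        (∀ x ∈ (↑S : Set W), ∃ u ∈ Comp G ↑S c, G.Adj x u) →
        ∃ u ∈ Comp G ↑S c, SimplicialVertex G u := by
      intro c d hSep' hN
      set A : Set W := Comp G ↑S c ∪ ↑S with hA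
      have hdC : d ∉ Comp G ↑S c := fun h => hSep'.2.2 h
      have hdA : d ∉ A := fun h => h.elim hdC hSep'.2.1
      have hcardA : Fintype.card ↥A ≤ n := by
        have : Fintype.card ↥A < Fintype.card W :=
          Fintype.card_lt_of_injective_of_notMem Subtype.val Subtype.val_injective
            (by rwa [Subtype.range_coe])
        omega
      have hGA : Chordal (G.induce A) := chordal_induce hG A
      have hcC : c ∈ Comp G ↑S c := mem_comp_self hSep'.1
      have hclosed : ∀ u, u ∈ Comp G ↑S c → ∀ w, G.Adj u w → w ∈ A := by
        intro u hu w hadj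
        by_cases hw : w ∈ (↑S : Set W)
        · exact Or.inr hw
        · exact Or.inl (comp_adj_closed hu hadj hw)
      by_cases hcomp : ∀ p q : ↥A, p ≠ q → (G.induce A).Adj p q
      · refine ⟨c, hcC, simplicial_of_induce (Or.inl hcC) (hclosed c hcC) ?_⟩
        intro p q _ _ hpq
        exact hcomp p q hpq
      · push_neg at hcomp
        obtain ⟨p, q, hpq, hnadjpq⟩ := hcomp
        obtain ⟨u, v, huv, hnadjuv, hsu, hsv⟩ := ih ↥A (G.induce A) hcardA hGA p q hpq hnadjpq
        have hone : (u : W) ∈ Comp G ↑S c ∨ (v : W) ∈ Comp G ↑S c := by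
          by_contra hcon
          push_neg at hcon
          have huS : (u : W) ∈ (↑S : Set W) := u.2.resolve_left hcon.1
          have hvS : (v : W) ∈ (↑S : Set W) := v.2.resolve_left hcon.2
          exact hnadjuv (hclique _ huS _ hvS (fun h => huv (Subtype.ext h)))
        rcases hone with h | h
        · exact ⟨u, h, simplicial_of_induce u.2 (hclosed _ h)
            (by simpa using hsu)⟩
        · exact ⟨v, h, simplicial_of_induce v.2 (hclosed _ h)
            (by simpa using hsv)⟩
    obtain ⟨u, hu, hsu⟩ := side a b hSep hNA
    obtain ⟨v, hv, hsv⟩ := side b a (sep_symm hSep) hNB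
    refine ⟨u, v, ?_, cross_nonadj hSep hu hv, hsu, hsv⟩
    intro h
    exact comp_disjoint hSep hu (h ▸ hv)

/-- Every chordal graph on at least one vertex has a simplicial vertex. -/
theorem stmt3 [Fintype V] [Nonempty V] (G : SimpleGraph V) (hG : Chordal G) :
    ∃ v : V, SimplicialVertex G v := by
  classical
  by_cases hcomp : ∀ p q : V, p ≠ q → G.Adj p q
  · exact ⟨Classical.arbitrary V, fun x y _ _ hxy => hcomp x y hxy⟩
  · push_neg at hcomp
    obtain ⟨a, b, hab, hnadj⟩ := hcomp
    obtain ⟨u, _, _, _, hsu, _⟩ := key (Fintype.card V) V G le_rfl hG a b hab hnadj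
    exact ⟨u, hsu⟩
end

section
/- Let G be a graph with a vertex u, and suppose every induced path on k vertices contained in G − N[u] dominates N(u). If Q is an induced path on k vertices in G − N[u] that has no failing extension within G − N[u], and x–Q–y is a failing extension of Q in G with y ∈ N(u), then x ∉ N(u). -/
variable {V : Type*}

/-- If every induced `P_k` in `G − N[u]` dominates `N(u)`, `Q` is an induced `P_k` in
`G − N[u]` with no failing extension within `G − N[u]`, and `x–Q–y` is a failing
extension of `Q` in `G` with `y ∈ N(u)`, then `x ∉ N(u)`. -/
theorem stmt16 (k : ℕ) (hk : 1 ≤ k) (G : SimpleGraph V) (u : V)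
    (hdom : ∀ p : Fin k → V, IsInducedPathOn G k p → (∀ i, OutsideClosedNbhd G u (p i)) →
      ∀ v : V, G.Adj u v → (∃ i, p i = v) ∨ (∃ i, G.Adj (p i) v))
    (Q : Fin k → V) (hQ : IsInducedPathOn G k Q) (hQout : ∀ i, OutsideClosedNbhd G u (Q i))
    (hnofail : ∀ q : Fin (k + 2) → V, IsExtension G Q q →
      (∀ i, OutsideClosedNbhd G u (q i)) →
      ∃ (n : ℕ) (c : Fin n → V), IsInducedCycleOn G n c ∧
        (∀ j, OutsideClosedNbhd G u (c j)) ∧ Set.range q ⊆ Set.range c)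
    (q : Fin (k + 2) → V) (hq : IsExtension G Q q) (hfail : ¬ InInducedCycle G q)
    (hy : G.Adj u (q (Fin.last (k + 1)))) :
    ¬ G.Adj u (q 0) := by
  intro hx
  apply hfail
  -- build the induced cycle q0 - q1 - ... - q(k+1) - u - q0
  set c : Fin (k + 3) → V := fun i => if h : (i : ℕ) < k + 2 then q ⟨i, h⟩ else u with hc
  -- middle vertices of q are outside N[u]
  have hmid : ∀ j : Fin (k + 2), 0 < (j : ℕ) → (j : ℕ) < k + 1 →
      OutsideClosedNbhd G u (q j) := by
    intro j h0 h1
    have hi : ((j : ℕ) - 1) < k := by omega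
    have hqi := hq.2 ⟨(j : ℕ) - 1, hi⟩
    have hidx : (Fin.mk ((j : ℕ) - 1) hi).succ.castSucc = j := by
      ext; simp; omega
    rw [hidx] at hqi
    rw [hqi]
    exact hQout _
  have hne : ∀ j : Fin (k + 2), u ≠ q j := by
    intro j
    rcases Nat.lt_or_ge 0 (j : ℕ) with h0 | h0
    · rcases Nat.lt_or_ge (j : ℕ) (k + 1) with h1 | h1
      · exact fun h => (hmid j h0 h1).1 h.symm
      · have : j = Fin.last (k + 1) := by ext; simp [Fin.last]; omega
        rw [this]; exact hy.ne
    · have : j = 0 := by ext; rw [Fin.val_zero]; omega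
      rw [this]; exact hx.ne
  -- u is adjacent exactly to q 0 and q (last)
  have hadjU : ∀ j : Fin (k + 2), G.Adj u (q j) ↔ ((j : ℕ) = 0 ∨ (j : ℕ) = k + 1) := by
    intro j
    constructor
    · intro h
      by_contra hcon
      push_neg at hcon
      exact (hmid j (by omega) (by omega)).2 h
    · rintro (h | h)
      · have : j = 0 := by ext; simpa using h
        rw [this]; exact hx
      · have : j = Fin.last (k + 1) := by ext; simpa [Fin.last] using h
        rw [this]; exact hy
  refine ⟨k + 3, c, ⟨by omega, ?_, ?_⟩, ?_⟩
  · -- injective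
    intro a b hab
    simp only [hc] at hab
    by_cases ha : (a : ℕ) < k + 2 <;> by_cases hb : (b : ℕ) < k + 2 <;>
      simp [ha, hb] at hab
    · have := hq.1.1 hab
      have : ((⟨(a : ℕ), ha⟩ : Fin (k + 2)) : ℕ) = ((⟨(b : ℕ), hb⟩ : Fin (k + 2)) : ℕ) :=
        congrArg Fin.val this
      ext; simpa using this
    · exact absurd hab.symm (hne _)
    · exact absurd hab (hne _)
    · ext; omega
  · -- adjacency characterization
    intro i j
    simp only [hc]
    by_cases hi : (i : ℕ) < k + 2 <;> by_cases hj : (j : ℕ) < k + 2 <;>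
      simp only [hi, hj, dif_pos, dif_neg, not_false_iff, dite_true, dite_false]
    · rw [hq.1.2 ⟨(i : ℕ), hi⟩ ⟨(j : ℕ), hj⟩]
      simp only [Fin.val_mk]
      rw [Nat.mod_eq_of_lt (by omega : (i : ℕ) + 1 < k + 3),
        Nat.mod_eq_of_lt (by omega : (j : ℕ) + 1 < k + 3)]
    · -- j is u
      have hjv : (j : ℕ) = k + 2 := by omega
      have e1 : ((i : ℕ) + 1) % (k + 3) = (i : ℕ) + 1 := Nat.mod_eq_of_lt (by omega)
      have e2 : ((j : ℕ) + 1) % (k + 3) = 0 := by rw [hjv]; exact Nat.mod_self _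
      rw [G.adj_comm, hadjU ⟨(i : ℕ), hi⟩]
      simp only [Fin.val_mk]
      rw [e1, e2, hjv]
      omega
    · -- i is u
      have hiv : (i : ℕ) = k + 2 := by omega
      have e1 : ((i : ℕ) + 1) % (k + 3) = 0 := by rw [hiv]; exact Nat.mod_self _
      have e2 : ((j : ℕ) + 1) % (k + 3) = (j : ℕ) + 1 := Nat.mod_eq_of_lt (by omega)
      rw [hadjU ⟨(j : ℕ), hj⟩]
      simp only [Fin.val_mk]
      rw [e1, e2, hiv]
      omega
    · -- both u
      have hiv : (i : ℕ) = k + 2 := by omega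
      have hjv : (j : ℕ) = k + 2 := by omega
      have e1 : ((i : ℕ) + 1) % (k + 3) = 0 := by rw [hiv]; exact Nat.mod_self _
      have e2 : ((j : ℕ) + 1) % (k + 3) = 0 := by rw [hjv]; exact Nat.mod_self _
      simp only [SimpleGraph.irrefl, false_iff]
      rw [e1, e2]
      omega
  · -- range
    rintro v ⟨j, rfl⟩
    exact ⟨⟨(j : ℕ), by omega⟩, by simp [hc]⟩
end
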